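/- Let N ≥ 1, let 0 < δ ≤ M₁ and L₁ ≥ 0 be constants, and let c : ℝ^N × [0, ∞) → ℝ be continuous with δ ≤ c(x,t) ≤ M₁ and |c(x,t) − c(y,t)| ≤ L₁ |x − y| for all x, y ∈ ℝ^N and t ≥ 0. Let K₀ ⊂ ℝ^N be nonempty, and define the minimal time function w(x) = inf{ t ≥ 0 : there exists an absolutely continuous y : [0,t] → ℝ^N with y(0) ∈ K₀, y(t) = x, and |ẏ(s)| ≤ c(y(s), s) for almost every s ∈ [0,t] }. Then w(x) is finite for every x ∈ ℝ^N and w is Lipschitz continuous with constant 1/δ, i.e. |w(x) − w(x′)| ≤ |x − x′| / δ for all x, x′ ∈ ℝ^N. -/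

import Mathlib

open MeasureTheory

section Aux

set_option linter.unusedSectionVars false

variable {E : Type*} [NormedAddCommGroup E] [NormedSpace ℝ E]

private lemma aux_int_le_const {f : ℝ → ℝ} {s₁ s₂ M : ℝ} (h12 : s₁ ≤ s₂) (hM : 0 ≤ M)
    (hf : ∀ s ∈ Set.Icc s₁ s₂, f s ≤ M) : ∫ s in s₁..s₂, f s ≤ M * (s₂ - s₁) := by
  by_cases hI : IntervalIntegrable f volume s₁ s₂
  · calc ∫ s in s₁..s₂, f s ≤ ∫ _ in s₁..s₂, M :=
          intervalIntegral.integral_mono_on h12 hI (intervalIntegrable_const) hf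
    _ = M * (s₂ - s₁) := by rw [intervalIntegral.integral_const, smul_eq_mul]; ring
  · rw [intervalIntegral.integral_undef hI]
    have : 0 ≤ s₂ - s₁ := by linarith
    positivity

private lemma aux_const_le_int {f : ℝ → ℝ} {s₁ s₂ d : ℝ} (h12 : s₁ ≤ s₂)
    (hI : IntervalIntegrable f volume s₁ s₂)
    (hf : ∀ s ∈ Set.Icc s₁ s₂, d ≤ f s) : d * (s₂ - s₁) ≤ ∫ s in s₁..s₂, f s := by
  calc d * (s₂ - s₁) = ∫ _ in s₁..s₂, d := by
        rw [intervalIntegral.integral_const, smul_eq_mul]; ring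
  _ ≤ ∫ s in s₁..s₂, f s :=
      intervalIntegral.integral_mono_on h12 (intervalIntegrable_const) hI hf

private lemma aux_integrable {c : E → ℝ → ℝ}
    (hc : ContinuousOn (fun p : E × ℝ => c p.1 p.2) (Set.univ ×ˢ Set.Ici 0))
    {y : ℝ → E} {s₁ s₂ : ℝ} (h0 : 0 ≤ s₁) (h12 : s₁ ≤ s₂)
    (hy : ContinuousOn y (Set.Icc s₁ s₂)) :
    IntervalIntegrable (fun s => c (y s) s) volume s₁ s₂ := by
  apply ContinuousOn.intervalIntegrable_of_Icc h12
  exact hc.comp (hy.prodMk continuousOn_id) (fun s hs => ⟨Set.mem_univ _, le_trans h0 hs.1⟩)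

/-- Extension lemma: a trajectory reaching `a` at time `t` can be extended along
a straight segment at speed `δ` to reach `b` at time `t + ‖b - a‖/δ`. -/
private lemma aux_extend {δ M₁ : ℝ} (hδ : 0 < δ) (hδM : δ ≤ M₁)
    {c : E → ℝ → ℝ}
    (hc : ContinuousOn (fun p : E × ℝ => c p.1 p.2) (Set.univ ×ˢ Set.Ici 0))
    (hcb : ∀ x : E, ∀ t : ℝ, 0 ≤ t → δ ≤ c x t ∧ c x t ≤ M₁)
    {K₀ : Set E} (a b : E) {t : ℝ} (ht : 0 ≤ t)
    {y : ℝ → E} (hy0 : y 0 ∈ K₀) (hyt : y t = a)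
    (H : ∀ s₁ s₂ : ℝ, 0 ≤ s₁ → s₁ ≤ s₂ → s₂ ≤ t →
      ‖y s₂ - y s₁‖ ≤ ∫ s in s₁..s₂, c (y s) s) :
    0 ≤ t + ‖b - a‖ / δ ∧
    ∃ z : ℝ → E, z 0 ∈ K₀ ∧ z (t + ‖b - a‖ / δ) = b ∧
      ∀ s₁ s₂ : ℝ, 0 ≤ s₁ → s₁ ≤ s₂ → s₂ ≤ t + ‖b - a‖ / δ →
        ‖z s₂ - z s₁‖ ≤ ∫ s in s₁..s₂, c (z s) s := by
  set T : ℝ := ‖b - a‖ / δ with hT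
  have hT0 : 0 ≤ T := div_nonneg (norm_nonneg _) hδ.le
  have hM0 : 0 ≤ M₁ := le_trans hδ.le hδM
  set z : ℝ → E := fun s => if s ≤ t then y s else a + ((s - t) / T) • (b - a) with hz
  -- z agrees with the line on [t, t+T]
  have zeq : ∀ s, t ≤ s → z s = a + ((s - t) / T) • (b - a) := by
    intro s hs
    rcases eq_or_lt_of_le hs with h | h
    · simp [hz, ← h, hyt]
    · simp [hz, not_le.mpr h]
  -- norm on line segment
  have lineq : ∀ s₁ s₂, t ≤ s₁ → s₁ ≤ s₂ → s₂ ≤ t + T →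
      ‖z s₂ - z s₁‖ = δ * (s₂ - s₁) := by
    intro s₁ s₂ h1 h12 h2
    rw [zeq s₁ h1, zeq s₂ (le_trans h1 h12)]
    have e1 : a + ((s₂ - t) / T) • (b - a) - (a + ((s₁ - t) / T) • (b - a))
        = ((s₂ - t) / T - (s₁ - t) / T) • (b - a) := by module
    rw [e1, div_sub_div_same, show s₂ - t - (s₁ - t) = s₂ - s₁ by ring, norm_smul]
    rcases eq_or_lt_of_le hT0 with hT' | hT'
    · have hba : ‖b - a‖ = 0 := by
        have := hT' ▸ hT
        field_simp at this
        linarith [this.symm, norm_nonneg (b - a)]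
      have : s₂ = s₁ := le_antisymm (by linarith [hT' ▸ h2]) h12
      simp [this, hba]
    · have hba : ‖b - a‖ = δ * T := by rw [hT]; field_simp
      rw [hba]
      rw [Real.norm_eq_abs, abs_div, abs_of_nonneg (by linarith : (0:ℝ) ≤ s₂ - s₁),
        abs_of_pos hT']
      field_simp
  -- y is M₁-Lipschitz on [0, t]
  have hyM : ∀ s₁ s₂, 0 ≤ s₁ → s₁ ≤ s₂ → s₂ ≤ t → ‖y s₂ - y s₁‖ ≤ M₁ * (s₂ - s₁) := by
    intro s₁ s₂ h0 h12 h2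
    refine le_trans (H s₁ s₂ h0 h12 h2) (aux_int_le_const h12 hM0 ?_)
    exact fun s hs => (hcb (y s) s (le_trans h0 hs.1)).2
  -- z is M₁-Lipschitz on [0, t+T]
  have hzM : ∀ s₁ s₂, 0 ≤ s₁ → s₁ ≤ s₂ → s₂ ≤ t + T → ‖z s₂ - z s₁‖ ≤ M₁ * (s₂ - s₁) := by
    intro s₁ s₂ h0 h12 h2
    rcases le_total s₂ t with hc2 | hc2
    · have e1 : z s₁ = y s₁ := if_pos (le_trans h12 hc2)
      have e2 : z s₂ = y s₂ := if_pos hc2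
      rw [e1, e2]; exact hyM s₁ s₂ h0 h12 hc2
    rcases le_total t s₁ with hc1 | hc1
    · rw [lineq s₁ s₂ hc1 h12 h2]
      nlinarith
    · calc ‖z s₂ - z s₁‖ ≤ ‖z s₂ - z t‖ + ‖z t - z s₁‖ := norm_sub_le_norm_sub_add_norm_sub _ _ _
      _ ≤ M₁ * (s₂ - t) + M₁ * (t - s₁) := by
          have e1 : z s₁ = y s₁ := if_pos hc1
          have e2 : z t = y t := if_pos le_rfl
          have l1 : ‖z t - z s₁‖ ≤ M₁ * (t - s₁) := by
            rw [e1, e2]; exact hyM s₁ t h0 hc1 le_rfl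
          have l2 : ‖z s₂ - z t‖ ≤ M₁ * (s₂ - t) := by
            rw [lineq t s₂ le_rfl hc2 h2]; nlinarith
          linarith
      _ = M₁ * (s₂ - s₁) := by ring
  -- continuity of z on subintervals of [0, t+T]
  have hzc : ∀ s₁ s₂, 0 ≤ s₁ → s₁ ≤ s₂ → s₂ ≤ t + T → ContinuousOn z (Set.Icc s₁ s₂) := by
    intro s₁ s₂ h0 h12 h2
    have : LipschitzOnWith (Real.toNNReal M₁) z (Set.Icc s₁ s₂) := by
      apply LipschitzOnWith.of_dist_le_mul
      intro u hu v hv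
      rw [Real.coe_toNNReal _ hM0, dist_eq_norm, dist_eq_norm]
      rcases le_total u v with huv | huv
      · rw [norm_sub_rev, Real.norm_eq_abs, abs_of_nonpos (by linarith)]
        have := hzM u v (le_trans h0 hu.1) huv (le_trans hv.2 h2)
        linarith
      · rw [Real.norm_eq_abs, abs_of_nonneg (by linarith)]
        exact hzM v u (le_trans h0 hv.1) huv (le_trans hu.2 h2)
    exact this.continuousOn
  have hzint : ∀ s₁ s₂, 0 ≤ s₁ → s₁ ≤ s₂ → s₂ ≤ t + T →
      IntervalIntegrable (fun s => c (z s) s) volume s₁ s₂ := by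
    intro s₁ s₂ h0 h12 h2
    exact aux_integrable hc h0 h12 (hzc s₁ s₂ h0 h12 h2)
  refine ⟨by linarith, z, ?_, ?_, ?_⟩
  · simpa [hz, if_pos ht] using hy0
  · rw [zeq _ (by linarith)]
    rcases eq_or_lt_of_le hT0 with hT' | hT'
    · have hba : b - a = 0 := by
        have h2 : ‖b - a‖ / δ = 0 := hT'.symm
        exact norm_eq_zero.mp ((div_eq_zero_iff.mp h2).resolve_right (ne_of_gt hδ))
      have hb : b = a := by rwa [sub_eq_zero] at hba
      simp [hba, hb]
    · have : (t + T - t) / T = 1 := by field_simp; ring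
      rw [this, one_smul]; abel
  · intro s₁ s₂ h0 h12 h2
    rcases le_total s₂ t with hc2 | hc2
    · have econg : ∀ s ∈ Set.uIcc s₁ s₂, c (z s) s = c (y s) s := by
        intro s hs
        rw [Set.uIcc_of_le h12] at hs
        rw [show z s = y s from if_pos (le_trans hs.2 hc2)]
      rw [show z s₂ = y s₂ from if_pos hc2, show z s₁ = y s₁ from if_pos (le_trans h12 hc2),
        intervalIntegral.integral_congr econg]
      exact H s₁ s₂ h0 h12 hc2
    rcases le_total t s₁ with hc1 | hc1
    · rw [lineq s₁ s₂ hc1 h12 h2]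
      exact aux_const_le_int h12 (hzint s₁ s₂ h0 h12 h2)
        (fun s hs => (hcb (z s) s (le_trans h0 hs.1)).1)
    · have ht2 : (0:ℝ) ≤ t := ht
      have i1 : IntervalIntegrable (fun s => c (z s) s) volume s₁ t :=
        hzint s₁ t h0 hc1 (by linarith)
      have i2 : IntervalIntegrable (fun s => c (z s) s) volume t s₂ :=
        hzint t s₂ ht hc2 h2
      have iadd : (∫ s in s₁..t, c (z s) s) + (∫ s in t..s₂, c (z s) s)
          = ∫ s in s₁..s₂, c (z s) s :=
        intervalIntegral.integral_add_adjacent_intervals i1 i2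
      have l1 : ‖z t - z s₁‖ ≤ ∫ s in s₁..t, c (z s) s := by
        have econg : ∀ s ∈ Set.uIcc s₁ t, c (z s) s = c (y s) s := by
          intro s hs
          rw [Set.uIcc_of_le hc1] at hs
          rw [show z s = y s from if_pos hs.2]
        rw [show z t = y t from if_pos le_rfl, show z s₁ = y s₁ from if_pos hc1,
          intervalIntegral.integral_congr econg]
        exact H s₁ t h0 hc1 le_rfl
      have l2 : ‖z s₂ - z t‖ ≤ ∫ s in t..s₂, c (z s) s := by
        rw [lineq t s₂ le_rfl hc2 h2]
        exact aux_const_le_int hc2 i2 (fun s hs => (hcb (z s) s (le_trans ht hs.1)).1)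
      calc ‖z s₂ - z s₁‖ ≤ ‖z s₂ - z t‖ + ‖z t - z s₁‖ := norm_sub_le_norm_sub_add_norm_sub _ _ _
      _ ≤ (∫ s in t..s₂, c (z s) s) + ∫ s in s₁..t, c (z s) s := add_le_add l2 l1
      _ = ∫ s in s₁..s₂, c (z s) s := by rw [← iadd]; ring

end Aux

/-- Let `c : ℝ^N × [0,∞) → ℝ` be continuous with `δ ≤ c ≤ M₁`
(`0 < δ ≤ M₁`) and `L₁`-Lipschitz in space, `K₀ ⊆ ℝ^N` nonempty, and let
`w(x)` be the minimal time to reach `x` from `K₀` along absolutely continuous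
trajectories with `|ẏ(s)| ≤ c(y(s), s)` a.e. (encoded by the equivalent metric
condition `‖y(s₂) − y(s₁)‖ ≤ ∫_{s₁}^{s₂} c(y(s), s) ds`). Then `w(x)` is finite
for every `x` and `w` is `1/δ`-Lipschitz. -/
theorem stmt_9 (N : ℕ) (hN : 1 ≤ N)
    (δ M₁ L₁ : ℝ) (hδ : 0 < δ) (hδM : δ ≤ M₁) (hL₁ : 0 ≤ L₁)
    (c : EuclideanSpace ℝ (Fin N) → ℝ → ℝ)
    (hc : ContinuousOn (fun p : EuclideanSpace ℝ (Fin N) × ℝ => c p.1 p.2)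
      (Set.univ ×ˢ Set.Ici 0))
    (hcb : ∀ x : EuclideanSpace ℝ (Fin N), ∀ t : ℝ, 0 ≤ t → δ ≤ c x t ∧ c x t ≤ M₁)
    (hcl : ∀ x y : EuclideanSpace ℝ (Fin N), ∀ t : ℝ, 0 ≤ t →
      |c x t - c y t| ≤ L₁ * ‖x - y‖)
    (K₀ : Set (EuclideanSpace ℝ (Fin N))) (hK₀ : K₀.Nonempty)
    (w : EuclideanSpace ℝ (Fin N) → ℝ)
    (hw : ∀ x, w x = sInf {t : ℝ | 0 ≤ t ∧
      ∃ y : ℝ → EuclideanSpace ℝ (Fin N), y 0 ∈ K₀ ∧ y t = x ∧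
        ∀ s₁ s₂ : ℝ, 0 ≤ s₁ → s₁ ≤ s₂ → s₂ ≤ t →
          ‖y s₂ - y s₁‖ ≤ ∫ s in s₁..s₂, c (y s) s}) :
    (∀ x : EuclideanSpace ℝ (Fin N), {t : ℝ | 0 ≤ t ∧
      ∃ y : ℝ → EuclideanSpace ℝ (Fin N), y 0 ∈ K₀ ∧ y t = x ∧
        ∀ s₁ s₂ : ℝ, 0 ≤ s₁ → s₁ ≤ s₂ → s₂ ≤ t →
          ‖y s₂ - y s₁‖ ≤ ∫ s in s₁..s₂, c (y s) s}.Nonempty) ∧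
    (∀ x x' : EuclideanSpace ℝ (Fin N), |w x - w x'| ≤ ‖x - x'‖ / δ) := by
  set S : EuclideanSpace ℝ (Fin N) → Set ℝ := fun x => {t : ℝ | 0 ≤ t ∧
      ∃ y : ℝ → EuclideanSpace ℝ (Fin N), y 0 ∈ K₀ ∧ y t = x ∧
        ∀ s₁ s₂ : ℝ, 0 ≤ s₁ → s₁ ≤ s₂ → s₂ ≤ t →
          ‖y s₂ - y s₁‖ ≤ ∫ s in s₁..s₂, c (y s) s} with hS
  have hne : ∀ x, (S x).Nonempty := by
    intro x
    obtain ⟨x₀, hx₀⟩ := hK₀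
    refine ⟨0 + ‖x - x₀‖ / δ,
      aux_extend hδ hδM hc hcb x₀ x le_rfl (y := fun _ => x₀) hx₀ rfl ?_⟩
    intro s₁ s₂ h0 h12 h2
    have hs : s₁ = s₂ := le_antisymm h12 (le_trans h2 h0)
    subst hs; simp
  have hbdd : ∀ x, BddBelow (S x) := fun x => ⟨0, fun τ hτ => hτ.1⟩
  have main : ∀ x x', w x ≤ w x' + ‖x - x'‖ / δ := by
    intro x x'
    rw [hw x, hw x']
    have h1 : ∀ τ ∈ S x', sInf (S x) - ‖x - x'‖ / δ ≤ τ := by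
      intro τ hτ
      obtain ⟨hτ0, y, hy0, hyt, H⟩ := hτ
      have hmem : (τ + ‖x - x'‖ / δ) ∈ S x :=
        aux_extend hδ hδM hc hcb x' x hτ0 hy0 hyt H
      have := csInf_le (hbdd x) hmem
      linarith
    have := le_csInf (hne x') h1
    linarith
  refine ⟨hne, fun x x' => ?_⟩
  rw [abs_sub_le_iff]
  constructor
  · linarith [main x x']
  · have := main x' x
    rw [norm_sub_rev] at this
    linarith
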